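/- Fix λ > 0 and define A : [0,∞) → ℝ^{2×2} by A(t) = [[-λ, eᵗ], [-eᵗ, -λ]], and h : [0,∞) → ℝ² by h(t) = λ·(sin(eᵗ), cos(eᵗ)). Then the function x*(t) = (1 − e^{-λt})·(sin(eᵗ), cos(eᵗ)) is differentiable, satisfies x*′(t) = A(t)x*(t) + h(t) for all t ≥ 0 with x*(0) = 0, and ‖x*(t)‖₂ = 1 − e^{-λt} → 1 as t → ∞; in particular x*(t) does not converge to 0. (Thus a perturbation in the class 𝒟 can destroy attractivity when A(t) is unbounded, even though the unperturbed system is globally uniformly exponentially stable.) -/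

import Mathlib

open Filter Matrix

/-- The unbounded rotation-type matrix `A(t) = [[-λ, eᵗ], [-eᵗ, -λ]]`. -/
noncomputable def Arot (lam : ℝ) : ℝ → Matrix (Fin 2) (Fin 2) ℝ := fun t =>
  Matrix.of ![![-lam, Real.exp t], ![-Real.exp t, -lam]]

/-- The perturbation `h(t) = λ·(sin(eᵗ), cos(eᵗ))`. -/
noncomputable def hRot (lam : ℝ) : ℝ → EuclideanSpace ℝ (Fin 2) := fun t =>
  (WithLp.equiv 2 (Fin 2 → ℝ)).symm
    ![lam * Real.sin (Real.exp t), lam * Real.cos (Real.exp t)]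

/-- The solution `x*(t) = (1 - e^{-λt})·(sin(eᵗ), cos(eᵗ))`. -/
noncomputable def xStar (lam : ℝ) : ℝ → EuclideanSpace ℝ (Fin 2) := fun t =>
  (WithLp.equiv 2 (Fin 2 → ℝ)).symm
    ![(1 - Real.exp (-lam * t)) * Real.sin (Real.exp t),
      (1 - Real.exp (-lam * t)) * Real.cos (Real.exp t)]

/-- `x*` solves `ẋ = A(t)x + h(t)` with `x*(0) = 0`, and
`‖x*(t)‖₂ = 1 - e^{-λt} → 1`, so `x*` does not converge to `0`: a perturbation
in the class 𝒟 can destroy attractivity when `A(t)` is unbounded. -/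
theorem stmt_12 (lam : ℝ) (hlam : 0 < lam) :
    (∀ t : ℝ, 0 ≤ t →
      HasDerivAt (xStar lam)
        (Matrix.toEuclideanLin (Arot lam t) (xStar lam t) + hRot lam t) t) ∧
    xStar lam 0 = 0 ∧
    (∀ t : ℝ, 0 ≤ t → ‖xStar lam t‖ = 1 - Real.exp (-lam * t)) ∧
    Tendsto (fun t : ℝ => ‖xStar lam t‖) atTop (nhds 1) ∧
    ¬ Tendsto (xStar lam) atTop (nhds 0) := by
  have hnorm : ∀ t : ℝ, 0 ≤ t → ‖xStar lam t‖ = 1 - Real.exp (-lam * t) := by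
    intro t ht
    have hle : Real.exp (-lam * t) ≤ 1 := by
      rw [Real.exp_le_one_iff]
      nlinarith
    rw [EuclideanSpace.norm_eq]
    have : ∑ i : Fin 2, ‖(xStar lam t) i‖ ^ 2 = (1 - Real.exp (-lam * t)) ^ 2 := by
      simp only [xStar, Fin.sum_univ_two]
      simp only [WithLp.equiv_symm_apply, WithLp.ofLp_toLp, Matrix.cons_val_zero, Matrix.cons_val_one,
        Matrix.head_cons, Real.norm_eq_abs, sq_abs]
      linear_combination (1 - Real.exp (-lam * t)) ^ 2 * Real.sin_sq_add_cos_sq (Real.exp t)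
    rw [this, Real.sqrt_sq (by linarith)]
  have hder : ∀ t : ℝ,
      HasDerivAt (xStar lam)
        ((WithLp.equiv 2 (Fin 2 → ℝ)).symm
          ![lam * Real.exp (-lam * t) * Real.sin (Real.exp t)
              + (1 - Real.exp (-lam * t)) * (Real.exp t * Real.cos (Real.exp t)),
            lam * Real.exp (-lam * t) * Real.cos (Real.exp t)
              - (1 - Real.exp (-lam * t)) * (Real.exp t * Real.sin (Real.exp t))]) t := by
    intro t
    have he : HasDerivAt (fun s : ℝ => 1 - Real.exp (-lam * s))
        (lam * Real.exp (-lam * t)) t := by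
      have hm : HasDerivAt (fun s : ℝ => -lam * s) (-lam) t := by
        simpa using (hasDerivAt_id t).const_mul (-lam)
      have h2 := hm.exp.const_sub 1
      exact h2.congr_deriv (by ring)
    have hs : HasDerivAt (fun s : ℝ => Real.sin (Real.exp s))
        (Real.cos (Real.exp t) * Real.exp t) t :=
      (Real.hasDerivAt_sin (Real.exp t)).comp t (Real.hasDerivAt_exp t)
    have hc : HasDerivAt (fun s : ℝ => Real.cos (Real.exp s))
        (-Real.sin (Real.exp t) * Real.exp t) t :=
      (Real.hasDerivAt_cos (Real.exp t)).comp t (Real.hasDerivAt_exp t)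
    have h1 : HasDerivAt (fun s : ℝ => (1 - Real.exp (-lam * s)) * Real.sin (Real.exp s))
        (lam * Real.exp (-lam * t) * Real.sin (Real.exp t)
          + (1 - Real.exp (-lam * t)) * (Real.exp t * Real.cos (Real.exp t))) t := by
      exact (he.mul hs).congr_deriv (by ring)
    have h2 : HasDerivAt (fun s : ℝ => (1 - Real.exp (-lam * s)) * Real.cos (Real.exp s))
        (lam * Real.exp (-lam * t) * Real.cos (Real.exp t)
          - (1 - Real.exp (-lam * t)) * (Real.exp t * Real.sin (Real.exp t))) t := by
      exact (he.mul hc).congr_deriv (by ring)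
    have hg : HasDerivAt (fun s : ℝ =>
        (![(1 - Real.exp (-lam * s)) * Real.sin (Real.exp s),
           (1 - Real.exp (-lam * s)) * Real.cos (Real.exp s)] : Fin 2 → ℝ))
        ![lam * Real.exp (-lam * t) * Real.sin (Real.exp t)
            + (1 - Real.exp (-lam * t)) * (Real.exp t * Real.cos (Real.exp t)),
          lam * Real.exp (-lam * t) * Real.cos (Real.exp t)
            - (1 - Real.exp (-lam * t)) * (Real.exp t * Real.sin (Real.exp t))] t := by
      rw [hasDerivAt_pi]
      intro i
      fin_cases i <;>
        simp only [Matrix.cons_val_zero, Matrix.cons_val_one, Matrix.head_cons]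
      exacts [h1, h2]
    exact ((PiLp.continuousLinearEquiv 2 ℝ (fun _ : Fin 2 => ℝ)).symm.toContinuousLinearMap.hasFDerivAt.comp_hasDerivAt t hg)
  have key : ∀ t : ℝ,
      Matrix.toEuclideanLin (Arot lam t) (xStar lam t) + hRot lam t =
      (WithLp.equiv 2 (Fin 2 → ℝ)).symm
        ![lam * Real.exp (-lam * t) * Real.sin (Real.exp t)
            + (1 - Real.exp (-lam * t)) * (Real.exp t * Real.cos (Real.exp t)),
          lam * Real.exp (-lam * t) * Real.cos (Real.exp t)
            - (1 - Real.exp (-lam * t)) * (Real.exp t * Real.sin (Real.exp t))] := by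
    intro t
    ext i
    fin_cases i <;>
      · simp [Arot, hRot, xStar, Matrix.toEuclideanLin_apply, Matrix.mulVec,
          dotProduct, Fin.sum_univ_two]
        ring
  have hlim : Tendsto (fun t : ℝ => ‖xStar lam t‖) atTop (nhds 1) := by
    have hexp : Tendsto (fun t : ℝ => Real.exp (-lam * t)) atTop (nhds 0) := by
      apply Real.tendsto_exp_atBot.comp
      exact Tendsto.const_mul_atTop_of_neg (neg_neg_iff_pos.mpr hlam) tendsto_id
    have h1 : Tendsto (fun t : ℝ => 1 - Real.exp (-lam * t)) atTop (nhds 1) := by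
      simpa using tendsto_const_nhds.sub hexp
    exact Tendsto.congr' ((eventually_ge_atTop 0).mono fun t ht => (hnorm t ht).symm) h1
  refine ⟨fun t ht => ?_, ?_, hnorm, hlim, ?_⟩
  · rw [key t]; exact hder t
  · ext i; fin_cases i <;> simp [xStar]
  · intro h
    have h2 := h.norm
    rw [norm_zero] at h2
    exact one_ne_zero (tendsto_nhds_unique hlim h2)
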